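/- arXiv:2508.21086 — 4 statements merged into one kernel-verified Lean document; each statement's English description precedes it below -/
import Mathlib

section
/- Let k₁ and k₂ be kernels on a measurable space X such that for every nonzero finite complex measure m, ∬ kᵢ(x,y) d conj(m)(x) dm(y) > 0 (integrally strictly positive definite), with both kernels bounded and measurable. Then the pointwise product k₁·k₂ is also integrally strictly positive definite, provided each kᵢ arises as kᵢ(x,y) = ⟨φᵢ(x), φᵢ(y)⟩ for a bounded measurable feature map φᵢ into a separable Hilbert space. -/
open MeasureTheory
open scoped InnerProductSpace ComplexConjugate

/-- A kernel `k` is integrally strictly positive definite if for every nonzero finite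
complex measure `m` (represented here as a density `f` with respect to a finite
positive measure `μ`), the double integral `∬ conj(f x) f y k(x,y) dμ dμ` is a
strictly positive real number. -/
def IsIntSPD {X : Type*} [MeasurableSpace X] (k : X → X → ℂ) : Prop :=
  ∀ (μ : Measure X), IsFiniteMeasure μ → ∀ f : X → ℂ,
    Integrable f μ → ¬ (f =ᵐ[μ] 0) →
      ∃ r : ℝ, 0 < r ∧
        (∫ x, ∫ y, (starRingEnd ℂ) (f x) * f y * k x y ∂μ ∂μ) = (r : ℂ)

noncomputable section ProductKernelAux

namespace ProductKernelAux

variable {ι κ : Type*}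

abbrev l2 (ι : Type*) : Type _ := lp (fun _ : ι => ℂ) 2

lemma memℓp_tens (a : l2 ι) (b : l2 κ) :
    Memℓp (fun p : ι × κ => a p.1 * b p.2) 2 := by
  apply memℓp_gen
  have h2 : (0:ℝ) < (2 : ENNReal).toReal := by norm_num
  have ha := (lp.memℓp a).summable h2
  have hb := (lp.memℓp b).summable h2
  have := (ha.mul_of_nonneg hb (fun i => by positivity) (fun j => by positivity))
  refine this.congr fun p => ?_
  simp [norm_mul, mul_pow]

def tens (a : l2 ι) (b : l2 κ) : l2 (ι × κ) := ⟨fun p => a p.1 * b p.2, memℓp_tens a b⟩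

@[simp] lemma tens_apply (a : l2 ι) (b : l2 κ) (p : ι × κ) :
    (tens a b : ∀ _ : ι × κ, ℂ) p = a p.1 * b p.2 := rfl

lemma summable_norm_mul (a a' : l2 ι) : Summable fun i => ‖a i‖ * ‖a' i‖ := by
  have h2 : (0:ℝ) < (2 : ENNReal).toReal := by norm_num
  have ha := ((lp.memℓp a).summable h2).congr
    (fun i => by norm_num : ∀ i, ‖a i‖ ^ (2 : ENNReal).toReal = ‖a i‖ ^ (2:ℕ))
  have hb := ((lp.memℓp a').summable h2).congr
    (fun i => by norm_num : ∀ i, ‖a' i‖ ^ (2 : ENNReal).toReal = ‖a' i‖ ^ (2:ℕ))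
  refine Summable.of_nonneg_of_le (fun i => by positivity) (fun i => ?_) (ha.add hb)
  nlinarith [sq_nonneg (‖a i‖ - ‖a' i‖), norm_nonneg (a i), norm_nonneg (a' i)]

lemma summable_mul_inner (a a' : l2 ι) (b b' : l2 κ) :
    Summable fun p : ι × κ => (conj (a p.1) * a' p.1) * (conj (b p.2) * b' p.2) := by
  have key := (summable_norm_mul a a').mul_of_nonneg (summable_norm_mul b b')
    (fun i => by positivity) (fun j => by positivity)
  refine Summable.of_norm_bounded key (fun p => le_of_eq ?_)
  simp only [norm_mul, RCLike.norm_conj]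

lemma inner_tens (a a' : l2 ι) (b b' : l2 κ) :
    ⟪tens a b, tens a' b'⟫_ℂ = ⟪a, a'⟫_ℂ * ⟪b, b'⟫_ℂ := by
  have hA : Summable fun i => conj (a i) * a' i := by
    simpa [RCLike.inner_apply, mul_comm] using lp.summable_inner (𝕜 := ℂ) a a'
  have hB : Summable fun j => conj (b j) * b' j := by
    simpa [RCLike.inner_apply, mul_comm] using lp.summable_inner (𝕜 := ℂ) b b'
  rw [lp.inner_eq_tsum, lp.inner_eq_tsum, lp.inner_eq_tsum]
  simp only [RCLike.inner_apply', tens_apply]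
  calc ∑' p : ι × κ, conj (a p.1 * b p.2) * (a' p.1 * b' p.2)
      = ∑' p : ι × κ, (conj (a p.1) * a' p.1) * (conj (b p.2) * b' p.2) := by
        refine tsum_congr fun p => ?_
        simp only [map_mul]; ring
    _ = (∑' i, conj (a i) * a' i) * ∑' j, conj (b j) * b' j :=
        (Summable.tsum_mul_tsum hA hB (summable_mul_inner a a' b b')).symm

lemma norm_tens (a : l2 ι) (b : l2 κ) : ‖tens a b‖ = ‖a‖ * ‖b‖ := by
  have h := inner_tens a a b b
  rw [inner_self_eq_norm_sq_to_K (𝕜 := ℂ), inner_self_eq_norm_sq_to_K (𝕜 := ℂ),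
    inner_self_eq_norm_sq_to_K (𝕜 := ℂ)] at h
  have h' : (‖tens a b‖ : ℝ) ^ 2 = (‖a‖ * ‖b‖) ^ 2 := by
    rw [mul_pow]; exact_mod_cast h
  calc ‖tens a b‖ = Real.sqrt (‖tens a b‖ ^ 2) := (Real.sqrt_sq (norm_nonneg _)).symm
    _ = Real.sqrt ((‖a‖ * ‖b‖) ^ 2) := by rw [h']
    _ = ‖a‖ * ‖b‖ := Real.sqrt_sq (by positivity)

/-- `tens` as a continuous bilinear map. -/
def tensCLM : l2 ι →L[ℂ] l2 κ →L[ℂ] l2 (ι × κ) :=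
  LinearMap.mkContinuous₂
    (LinearMap.mk₂ ℂ tens
      (fun a a' b => lp.ext (by ext p; simp [lp.coeFn_add, Pi.add_apply, add_mul]))
      (fun c a b => lp.ext (by ext p; simp [lp.coeFn_smul, Pi.smul_apply, smul_eq_mul]; ring))
      (fun a b b' => lp.ext (by ext p; simp [lp.coeFn_add, Pi.add_apply, mul_add]))
      (fun c a b => lp.ext (by ext p; simp [lp.coeFn_smul, Pi.smul_apply, smul_eq_mul]; ring)))
    1 (fun a b => by simp [LinearMap.mk₂_apply, norm_tens])

@[simp] lemma tensCLM_apply (a : l2 ι) (b : l2 κ) : tensCLM a b = tens a b := rfl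

lemma continuous_tens : Continuous (fun p : l2 ι × l2 κ => tens p.1 p.2) :=
  (tensCLM (ι := ι) (κ := κ)).continuous₂

/-- An orthonormal family in a separable space is countable. -/
lemma orthonormal_countable {E : Type*} [NormedAddCommGroup E] [InnerProductSpace ℂ E]
    [TopologicalSpace.SeparableSpace E] {v : ι → E} (hv : Orthonormal ℂ v) : Countable ι := by
  refine Pairwise.countable_of_isOpen_disjoint (s := fun i => Metric.ball (v i) (1/2))
    (fun i j hij => Metric.ball_disjoint_ball ?_) (fun i => Metric.isOpen_ball)
    (fun i => Metric.nonempty_ball.2 (by norm_num))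
  have h1 : ‖v i - v j‖ ^ 2 = 2 := by
    rw [@norm_sub_sq ℂ]
    simp [hv.1 i, hv.1 j, hv.2 hij]
    norm_num
  rw [dist_eq_norm]
  nlinarith [norm_nonneg (v i - v j)]

/-- Key computation: the double integral of `conj (f x) * f y * ⟪Ψ x, Ψ y⟫` is
`‖∫ f • Ψ‖²`. -/
lemma double_integral_eq {X : Type*} [MeasurableSpace X] (μ : Measure X)
    {H : Type*} [NormedAddCommGroup H] [InnerProductSpace ℂ H] [CompleteSpace H]
    {Ψ : X → H} {f : X → ℂ} (hint : Integrable (fun x => f x • Ψ x) μ) :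
    (∫ x, ∫ y, conj (f x) * f y * ⟪Ψ x, Ψ y⟫_ℂ ∂μ ∂μ)
      = ((‖∫ x, f x • Ψ x ∂μ‖ ^ 2 : ℝ) : ℂ) := by
  set g : X → H := fun x => f x • Ψ x with hg
  set v : H := ∫ x, g x ∂μ with hv
  have h1 : ∀ x y, conj (f x) * f y * ⟪Ψ x, Ψ y⟫_ℂ = ⟪g x, g y⟫_ℂ := by
    intro x y
    simp only [hg, inner_smul_left, inner_smul_right]
    ring
  have h2 : (fun x => ∫ y, conj (f x) * f y * ⟪Ψ x, Ψ y⟫_ℂ ∂μ) = fun x => ⟪g x, v⟫_ℂ := by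
    funext x
    calc ∫ y, conj (f x) * f y * ⟪Ψ x, Ψ y⟫_ℂ ∂μ = ∫ y, ⟪g x, g y⟫_ℂ ∂μ := by
          simp only [h1]
      _ = ⟪g x, v⟫_ℂ := integral_inner hint (g x)
  rw [h2]
  have h3 : (fun x => ⟪g x, v⟫_ℂ) = fun x => conj ⟪v, g x⟫_ℂ := by
    funext x; rw [inner_conj_symm]
  rw [h3, integral_conj, integral_inner hint v, inner_conj_symm,
    inner_self_eq_norm_sq_to_K, ← hv]
  norm_cast

end ProductKernelAux

open ProductKernelAux UniformSpace in
/-- The pointwise product of two integrally strictly positive definite kernels, each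
given by a bounded measurable feature map into a separable complex Hilbert space, is
integrally strictly positive definite. -/
theorem product_kernel_isIntSPD
    {X : Type*} [MeasurableSpace X]
    {H₁ : Type*} [NormedAddCommGroup H₁] [InnerProductSpace ℂ H₁]
    [TopologicalSpace.SeparableSpace H₁] [MeasurableSpace H₁] [BorelSpace H₁]
    {H₂ : Type*} [NormedAddCommGroup H₂] [InnerProductSpace ℂ H₂]
    [TopologicalSpace.SeparableSpace H₂] [MeasurableSpace H₂] [BorelSpace H₂]
    (φ₁ : X → H₁) (φ₂ : X → H₂)
    (hφ₁ : Measurable φ₁) (hφ₂ : Measurable φ₂)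
    (hb₁ : ∃ C, ∀ x, ‖φ₁ x‖ ≤ C) (hb₂ : ∃ C, ∀ x, ‖φ₂ x‖ ≤ C)
    (h₁ : IsIntSPD (fun x y => ⟪φ₁ x, φ₁ y⟫_ℂ))
    (h₂ : IsIntSPD (fun x y => ⟪φ₂ x, φ₂ y⟫_ℂ)) :
    IsIntSPD (fun x y => (⟪φ₁ x, φ₁ y⟫_ℂ) * (⟪φ₂ x, φ₂ y⟫_ℂ)) := by
  classical
  obtain ⟨C₁, hC₁⟩ := hb₁
  obtain ⟨C₂, hC₂⟩ := hb₂
  set D₁ := max C₁ 0 with hD₁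
  set D₂ := max C₂ 0 with hD₂
  have hD₁0 : 0 ≤ D₁ := le_max_right _ _
  have hD₂0 : 0 ≤ D₂ := le_max_right _ _
  have hφD₁ : ∀ x, ‖φ₁ x‖ ≤ D₁ := fun x => (hC₁ x).trans (le_max_left _ _)
  have hφD₂ : ∀ x, ‖φ₂ x‖ ≤ D₂ := fun x => (hC₂ x).trans (le_max_left _ _)
  haveI : SecondCountableTopology H₁ := UniformSpace.secondCountable_of_separable H₁
  haveI : SecondCountableTopology H₂ := UniformSpace.secondCountable_of_separable H₂
  haveI : TopologicalSpace.SeparableSpace (Completion H₁) :=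
    Completion.denseRange_coe.separableSpace (Completion.continuous_coe H₁)
  haveI : TopologicalSpace.SeparableSpace (Completion H₂) :=
    Completion.denseRange_coe.separableSpace (Completion.continuous_coe H₂)
  set Φ₁ : X → Completion H₁ := fun x => (φ₁ x : Completion H₁) with hΦ₁def
  set Φ₂ : X → Completion H₂ := fun x => (φ₂ x : Completion H₂) with hΦ₂def
  have hΦ₁ : StronglyMeasurable Φ₁ :=
    (Completion.continuous_coe H₁).comp_stronglyMeasurable hφ₁.stronglyMeasurable
  have hΦ₂ : StronglyMeasurable Φ₂ :=
    (Completion.continuous_coe H₂).comp_stronglyMeasurable hφ₂.stronglyMeasurable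
  have hnΦ₁ : ∀ x, ‖Φ₁ x‖ ≤ D₁ := fun x => by
    rw [hΦ₁def]; simpa [Completion.norm_coe] using hφD₁ x
  have hnΦ₂ : ∀ x, ‖Φ₂ x‖ ≤ D₂ := fun x => by
    rw [hΦ₂def]; simpa [Completion.norm_coe] using hφD₂ x
  have hiΦ₁ : ∀ x y, ⟪Φ₁ x, Φ₁ y⟫_ℂ = ⟪φ₁ x, φ₁ y⟫_ℂ := fun x y =>
    Completion.inner_coe _ _
  have hiΦ₂ : ∀ x y, ⟪Φ₂ x, Φ₂ y⟫_ℂ = ⟪φ₂ x, φ₂ y⟫_ℂ := fun x y =>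
    Completion.inner_coe _ _
  obtain ⟨w₁, b₁, -⟩ := exists_hilbertBasis ℂ (Completion H₁)
  obtain ⟨w₂, b₂, -⟩ := exists_hilbertBasis ℂ (Completion H₂)
  haveI : Countable w₂ := orthonormal_countable b₂.orthonormal
  set g₁ : X → l2 w₁ := fun x => b₁.repr (Φ₁ x) with hg₁def
  set g₂ : X → l2 w₂ := fun x => b₂.repr (Φ₂ x) with hg₂def
  have hg₁ : StronglyMeasurable g₁ := b₁.repr.continuous.comp_stronglyMeasurable hΦ₁
  have hg₂ : StronglyMeasurable g₂ := b₂.repr.continuous.comp_stronglyMeasurable hΦ₂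
  set ψ : X → l2 (w₁ × w₂) := fun x => tens (g₁ x) (g₂ x) with hψdef
  have hψ : StronglyMeasurable ψ :=
    continuous_tens.comp_stronglyMeasurable (hg₁.prodMk hg₂)
  have hψn : ∀ x, ‖ψ x‖ ≤ D₁ * D₂ := fun x => by
    rw [hψdef]
    simp only [norm_tens, hg₁def, hg₂def, LinearIsometryEquiv.norm_map]
    exact mul_le_mul (hnΦ₁ x) (hnΦ₂ x) (norm_nonneg _) hD₁0
  have hkey : ∀ x y, ⟪ψ x, ψ y⟫_ℂ = ⟪φ₁ x, φ₁ y⟫_ℂ * ⟪φ₂ x, φ₂ y⟫_ℂ := fun x y => by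
    rw [hψdef]
    simp only [inner_tens, hg₁def, hg₂def, LinearIsometryEquiv.inner_map_map]
    rw [hiΦ₁, hiΦ₂]
  intro μ hμ f hf hne
  have hint : Integrable (fun x => f x • ψ x) μ := by
    refine Integrable.mono' (hf.norm.mul_const (D₁ * D₂))
      (hf.aestronglyMeasurable.smul hψ.aestronglyMeasurable) (ae_of_all _ fun x => ?_)
    rw [norm_smul]
    exact mul_le_mul_of_nonneg_left (hψn x) (norm_nonneg _)
  set v : l2 (w₁ × w₂) := ∫ x, f x • ψ x ∂μ with hvdef
  have hmain : (∫ x, ∫ y, conj (f x) * f y * (⟪φ₁ x, φ₁ y⟫_ℂ * ⟪φ₂ x, φ₂ y⟫_ℂ) ∂μ ∂μ)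
      = ((‖v‖ ^ 2 : ℝ) : ℂ) := by
    rw [hvdef]; refine Eq.trans ?_ (double_integral_eq μ hint)
    congr 1; funext x; congr 1; funext y
    rw [hkey]
  by_cases hv : v = 0
  · exfalso
    -- coordinates of v vanish
    have hcoord : ∀ (i : w₁) (j : w₂), (∫ x, f x * (g₁ x i * g₂ x j) ∂μ) = 0 := by
      intro i j
      have h0 : ⟪lp.single 2 ((i, j) : w₁ × w₂) (1 : ℂ), v⟫_ℂ = 0 := by
        rw [hv, inner_zero_right]
      calc (∫ x, f x * (g₁ x i * g₂ x j) ∂μ)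
          = ∫ x, ⟪lp.single 2 ((i, j) : w₁ × w₂) (1 : ℂ), f x • ψ x⟫_ℂ ∂μ := by
            congr 1; funext x
            rw [inner_smul_right, lp.inner_single_left]
            simp only [RCLike.inner_apply', map_one, one_mul, hψdef, tens_apply]
        _ = ⟪lp.single 2 ((i, j) : w₁ × w₂) (1 : ℂ), v⟫_ℂ := integral_inner hint _
        _ = 0 := h0
    -- each sliced function vanishes a.e.
    have hfj0 : ∀ j : w₂, (fun x => f x * g₂ x j) =ᵐ[μ] 0 := by
      intro j
      by_contra hne'
      set fj : X → ℂ := fun x => f x * g₂ x j with hfjdef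
      have hg₂j : StronglyMeasurable fun x => g₂ x j := by
        have : Continuous fun (y : l2 w₂) => (y : ∀ _ : w₂, ℂ) j := by
          refine continuous_iff_continuousAt.2 fun y => ?_
          refine Metric.continuousAt_iff.2 fun ε hε => ⟨ε, hε, fun {z} hz => ?_⟩
          calc dist (z j) (y j) = ‖(z - y) j‖ := by
                rw [dist_eq_norm, lp.coeFn_sub, Pi.sub_apply]
            _ ≤ ‖z - y‖ := lp.norm_apply_le_norm (by norm_num) _ _
            _ < ε := by rwa [← dist_eq_norm]
        exact this.comp_stronglyMeasurable hg₂
      have hg₂jn : ∀ x, ‖g₂ x j‖ ≤ D₂ := fun x =>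
        (lp.norm_apply_le_norm (by norm_num) (g₂ x) j).trans
          (by simpa [hg₂def, LinearIsometryEquiv.norm_map] using hnΦ₂ x)
      have hfjm : AEStronglyMeasurable fj μ :=
        hf.aestronglyMeasurable.mul hg₂j.aestronglyMeasurable
      have hfj_int : Integrable fj μ := by
        refine Integrable.mono' (hf.norm.mul_const D₂) hfjm (ae_of_all _ fun x => ?_)
        rw [hfjdef]
        simp only [norm_mul]
        exact mul_le_mul_of_nonneg_left (hg₂jn x) (norm_nonneg _)
      have hintj : Integrable (fun x => fj x • Φ₁ x) μ := by
        refine Integrable.mono' (hf.norm.mul_const (D₂ * D₁))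
          (hfjm.smul hΦ₁.aestronglyMeasurable) (ae_of_all _ fun x => ?_)
        rw [norm_smul, hfjdef]
        simp only [norm_mul]
        calc ‖f x‖ * ‖g₂ x j‖ * ‖Φ₁ x‖ ≤ ‖f x‖ * D₂ * D₁ := by
              refine mul_le_mul (mul_le_mul_of_nonneg_left (hg₂jn x) (norm_nonneg _))
                (hnΦ₁ x) (norm_nonneg _) (by positivity)
          _ = ‖f x‖ * (D₂ * D₁) := by ring
      have hw : (∫ x, fj x • Φ₁ x ∂μ) = 0 := by
        apply b₁.repr.injective
        rw [map_zero]
        apply lp.ext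
        funext i
        have e1 : b₁.repr (∫ x, fj x • Φ₁ x ∂μ) i = ⟪b₁ i, ∫ x, fj x • Φ₁ x ∂μ⟫_ℂ :=
          b₁.repr_apply_apply _ i
        rw [e1, ← integral_inner hintj (b₁ i)]
        have e2 : (∫ x, ⟪b₁ i, fj x • Φ₁ x⟫_ℂ ∂μ) = ∫ x, f x * (g₁ x i * g₂ x j) ∂μ := by
          congr 1; funext x
          rw [inner_smul_right, hfjdef]
          have : (g₁ x : ∀ _ : w₁, ℂ) i = ⟪b₁ i, Φ₁ x⟫_ℂ := b₁.repr_apply_apply _ i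
          rw [this]
          ring
        rw [e2, hcoord i j]
        simp [lp.coeFn_zero]
      obtain ⟨r, hr, heq⟩ := h₁ μ hμ fj hfj_int hne'
      have hval : (∫ x, ∫ y, conj (fj x) * fj y * ⟪φ₁ x, φ₁ y⟫_ℂ ∂μ ∂μ) = 0 := by
        have h := double_integral_eq μ hintj
        rw [hw] at h
        have h2 : (∫ x, ∫ y, conj (fj x) * fj y * ⟪φ₁ x, φ₁ y⟫_ℂ ∂μ ∂μ)
            = ∫ x, ∫ y, conj (fj x) * fj y * ⟪Φ₁ x, Φ₁ y⟫_ℂ ∂μ ∂μ := by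
          congr 1; funext x; congr 1; funext y; rw [hiΦ₁]
        rw [h2, h]
        norm_num
      simp only at heq
      rw [heq] at hval
      exact absurd (Complex.ofReal_eq_zero.1 hval) (ne_of_gt hr)
    have hae : ∀ᵐ x ∂μ, ∀ j : w₂, f x * g₂ x j = 0 :=
      (ae_all_iff).2 fun j => (hfj0 j).mono fun x hx => by simpa using hx
    have hae2 : (fun x => f x • Φ₂ x) =ᵐ[μ] 0 := hae.mono fun x hx => by
      by_cases hfx : f x = 0
      · simp [hfx]
      · have hz : g₂ x = 0 := by
          apply lp.ext
          funext j
          have := hx j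
          rcases mul_eq_zero.1 this with h | h
          · exact absurd h hfx
          · simpa [lp.coeFn_zero] using h
        have hz' : b₂.repr (Φ₂ x) = 0 := hz
        have hΦz : Φ₂ x = 0 := b₂.repr.map_eq_zero_iff.1 hz'
        simp [hΦz]
    obtain ⟨r, hr, heq⟩ := h₂ μ hμ f hf hne
    have hΦ₂int : Integrable (fun y => f y • Φ₂ y) μ := by
      refine Integrable.mono' (hf.norm.mul_const D₂)
        (hf.aestronglyMeasurable.smul hΦ₂.aestronglyMeasurable) (ae_of_all _ fun x => ?_)
      rw [norm_smul]
      exact mul_le_mul_of_nonneg_left (hnΦ₂ x) (norm_nonneg _)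
    have hiz : (∫ y, f y • Φ₂ y ∂μ) = 0 := by
      rw [integral_congr_ae hae2]
      simp
    have hzero : (∫ x, ∫ y, conj (f x) * f y * ⟪φ₂ x, φ₂ y⟫_ℂ ∂μ ∂μ) = 0 := by
      have hx0 : ∀ x, (∫ y, conj (f x) * f y * ⟪φ₂ x, φ₂ y⟫_ℂ ∂μ) = 0 := fun x => by
        calc (∫ y, conj (f x) * f y * ⟪φ₂ x, φ₂ y⟫_ℂ ∂μ)
            = ∫ y, ⟪f x • Φ₂ x, f y • Φ₂ y⟫_ℂ ∂μ := by
              congr 1; funext y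
              rw [inner_smul_left, inner_smul_right, hiΦ₂]
              ring
          _ = ⟪f x • Φ₂ x, ∫ y, f y • Φ₂ y ∂μ⟫_ℂ := integral_inner hΦ₂int _
          _ = 0 := by rw [hiz, inner_zero_right]
      simp only [hx0]
      simp
    simp only at heq
    rw [heq] at hzero
    exact absurd (Complex.ofReal_eq_zero.1 hzero) (ne_of_gt hr)
  · refine ⟨‖v‖ ^ 2, pow_pos (norm_pos_iff.2 hv) 2, ?_⟩
    simp only
    exact hmain
end ProductKernelAux
end

section
/- If k(x,y) = ⟨φ(x), φ(y)⟩ is integrally strictly positive definite for a bounded measurable feature map φ into a separable Hilbert space, then the norm-squared kernel |k(x,y)|² is also integrally strictly positive definite. -/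
open MeasureTheory
open scoped InnerProductSpace

private lemma normSq_complex (z : ℂ) : ((‖z‖ : ℂ)) ^ 2 = z * (starRingEnd ℂ) z := by
  rw [Complex.mul_conj]
  norm_cast
  simp [Complex.normSq_eq_norm_sq]

private lemma parseval_sq {K : Type*} [NormedAddCommGroup K] [InnerProductSpace ℂ K]
    [CompleteSpace K] {ι : Type*} (b : HilbertBasis ι ℂ K) (v : K) :
    ∑' i, ‖⟪b i, v⟫_ℂ‖ ^ 2 = ‖v‖ ^ 2 := by
  have h2 : ∀ i, ⟪v, b i⟫_ℂ * ⟪b i, v⟫_ℂ = ((‖⟪b i, v⟫_ℂ‖ ^ 2 : ℝ) : ℂ) := by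
    intro i
    rw [← inner_conj_symm v (b i), mul_comm, ← normSq_complex]
    push_cast
    ring
  have h1 := b.tsum_inner_mul_inner v v
  have h3 : ((∑' i, ‖⟪b i, v⟫_ℂ‖ ^ 2 : ℝ) : ℂ) = ((‖v‖ ^ 2 : ℝ) : ℂ) := by
    rw [Complex.ofReal_tsum]
    calc ∑' i, ((‖⟪b i, v⟫_ℂ‖ ^ 2 : ℝ) : ℂ)
        = ∑' i, ⟪v, b i⟫_ℂ * ⟪b i, v⟫_ℂ := tsum_congr fun i => (h2 i).symm
      _ = ⟪v, v⟫_ℂ := h1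
      _ = ((‖v‖ ^ 2 : ℝ) : ℂ) := by
          rw [@inner_self_eq_norm_sq_to_K ℂ]; norm_cast
  exact_mod_cast h3

/-- If `k(x,y) = ⟨φ(x), φ(y)⟩` is integrally strictly positive definite for a bounded
measurable feature map `φ` into a separable complex Hilbert space, then the
norm-squared kernel `|k(x,y)|²` is also integrally strictly positive definite. -/
theorem normSq_kernel_isIntSPD
    {X : Type*} [MeasurableSpace X]
    {H : Type*} [NormedAddCommGroup H] [InnerProductSpace ℂ H]
    [TopologicalSpace.SeparableSpace H] [MeasurableSpace H] [BorelSpace H]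
    (φ : X → H) (hφ : Measurable φ) (hb : ∃ C, ∀ x, ‖φ x‖ ≤ C)
    (h : IsIntSPD (fun x y => ⟪φ x, φ y⟫_ℂ)) :
    IsIntSPD (fun x y => ((‖⟪φ x, φ y⟫_ℂ‖ : ℂ) ^ 2)) := by
  classical
  obtain ⟨C₀, hC₀⟩ := hb
  intro μ hμ f hf hf0
  haveI := hμ
  haveI : SecondCountableTopology H := UniformSpace.secondCountable_of_separable H
  set C : ℝ := max C₀ 0 with hCdef
  have hC : ∀ x, ‖φ x‖ ≤ C := fun x => (hC₀ x).trans (le_max_left _ _)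
  have hC0 : (0:ℝ) ≤ C := le_max_right _ _
  have hkb : ∀ x y : X, ‖⟪φ x, φ y⟫_ℂ‖ ≤ C * C := fun x y =>
    (norm_inner_le_norm _ _).trans (mul_le_mul (hC x) (hC y) (norm_nonneg _) hC0)
  -- the completion of H, with a countable Hilbert basis
  haveI hsepK : TopologicalSpace.SeparableSpace (UniformSpace.Completion H) :=
    UniformSpace.Completion.denseRange_coe.separableSpace
      (UniformSpace.Completion.continuous_coe H)
  obtain ⟨w, b, -⟩ := exists_hilbertBasis ℂ (UniformSpace.Completion H)
  haveI : Countable w := by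
    refine Pairwise.countable_of_isOpen_disjoint
      (s := fun i : w => Metric.ball ((b i : UniformSpace.Completion H)) (2⁻¹ : ℝ)) ?_
      (fun i => Metric.isOpen_ball) (fun i => Metric.nonempty_ball.2 (by norm_num))
    intro i j hij
    have hb1 : ‖(b i : UniformSpace.Completion H)‖ = 1 := b.orthonormal.1 i
    have hb1' : ‖(b j : UniformSpace.Completion H)‖ = 1 := b.orthonormal.1 j
    have hb2 : ⟪(b i : UniformSpace.Completion H), (b j : UniformSpace.Completion H)⟫_ℂ = 0 :=
      b.orthonormal.2 hij
    have hdist : (1:ℝ) ≤ dist (b i) (b j) := by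
      rw [dist_eq_norm]
      have hsq : ‖(b i : UniformSpace.Completion H) - b j‖ ^ 2 = 2 := by
        rw [@norm_sub_sq ℂ, hb2, hb1, hb1']
        norm_num
      nlinarith [norm_nonneg ((b i : UniformSpace.Completion H) - b j)]
    exact Metric.ball_disjoint_ball (by linarith)
  -- basic pointwise facts
  have hkcoe : ∀ x y : X,
      ⟪((φ x : UniformSpace.Completion H)), ((φ y : UniformSpace.Completion H))⟫_ℂ
        = ⟪φ x, φ y⟫_ℂ := fun x y => UniformSpace.Completion.inner_coe _ _
  -- measurability facts
  have hfae : AEStronglyMeasurable f μ := hf.1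
  have hkm : Measurable (fun p : X × X => ⟪φ p.1, φ p.2⟫_ℂ) := by
    have hcont : Continuous (fun q : H × H => ⟪q.1, q.2⟫_ℂ) := continuous_inner
    exact hcont.measurable.comp ((hφ.comp measurable_fst).prodMk (hφ.comp measurable_snd))
  have hcm : ∀ i : w, Measurable fun x : X =>
      ⟪((φ x : UniformSpace.Completion H)), (b i : UniformSpace.Completion H)⟫_ℂ := by
    intro i
    have hcont : Continuous fun v : H =>
        ⟪((v : UniformSpace.Completion H)), (b i : UniformSpace.Completion H)⟫_ℂ :=
      Continuous.inner (UniformSpace.Completion.continuous_coe H) continuous_const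
    exact hcont.measurable.comp hφ
  have hcm2 : ∀ i : w, Measurable fun x : X =>
      ⟪(b i : UniformSpace.Completion H), ((φ x : UniformSpace.Completion H))⟫_ℂ := by
    intro i
    have hcont : Continuous fun v : H =>
        ⟪(b i : UniformSpace.Completion H), ((v : UniformSpace.Completion H))⟫_ℂ :=
      Continuous.inner continuous_const (UniformSpace.Completion.continuous_coe H)
    exact hcont.measurable.comp hφ
  -- boundedness of the coefficient functions
  have hcb : ∀ (i : w) (x : X),
      ‖⟪((φ x : UniformSpace.Completion H)), (b i : UniformSpace.Completion H)⟫_ℂ‖ ≤ C := by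
    intro i x
    refine (norm_inner_le_norm _ _).trans ?_
    rw [b.orthonormal.1 i, mul_one, UniformSpace.Completion.norm_coe]
    exact hC x
  -- the coefficient densities g i = f * ⟪φ ·, b i⟫ are integrable
  have hgint : ∀ i : w, Integrable (fun x : X =>
      f x * ⟪((φ x : UniformSpace.Completion H)), (b i : UniformSpace.Completion H)⟫_ℂ) μ := by
    intro i
    refine (hf.norm.mul_const C).mono' (hfae.mul (hcm i).aestronglyMeasurable) ?_
    filter_upwards with x
    rw [norm_mul]
    exact mul_le_mul_of_nonneg_left (hcb i x) (norm_nonneg _)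
  -- the dominated convergence / Parseval expansion on the product space
  have key : HasSum
      (fun i : w => ∫ p : X × X, (starRingEnd ℂ) (f p.1) * f p.2 * ⟪φ p.1, φ p.2⟫_ℂ *
          (⟪((φ p.2 : UniformSpace.Completion H)), (b i : UniformSpace.Completion H)⟫_ℂ *
           ⟪(b i : UniformSpace.Completion H), ((φ p.1 : UniformSpace.Completion H))⟫_ℂ)
          ∂(μ.prod μ))
      (∫ p : X × X, (starRingEnd ℂ) (f p.1) * f p.2 * ((‖⟪φ p.1, φ p.2⟫_ℂ‖ : ℂ) ^ 2)
          ∂(μ.prod μ)) := by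
    refine MeasureTheory.hasSum_integral_of_dominated_convergence
      (bound := fun (i : w) (p : X × X) => (‖f p.1‖ * ‖f p.2‖ * (C * C)) *
        (‖⟪(b i : UniformSpace.Completion H), ((φ p.1 : UniformSpace.Completion H))⟫_ℂ‖ ^ 2 +
         ‖⟪(b i : UniformSpace.Completion H), ((φ p.2 : UniformSpace.Completion H))⟫_ℂ‖ ^ 2))
      ?_ ?_ ?_ ?_ ?_
    · intro i
      exact (((Complex.continuous_conj.comp_aestronglyMeasurable hfae).comp_fst.mul
        hfae.comp_snd).mul hkm.aestronglyMeasurable).mul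
        (((hcm i).comp measurable_snd).mul ((hcm2 i).comp measurable_fst)).aestronglyMeasurable
    · intro i
      filter_upwards with p
      rw [norm_mul, norm_mul, norm_mul, norm_mul, RCLike.norm_conj,
        norm_inner_symm ((φ p.2 : UniformSpace.Completion H))]
      have hab : ‖⟪(b i : UniformSpace.Completion H), ((φ p.2 : UniformSpace.Completion H))⟫_ℂ‖ *
            ‖⟪(b i : UniformSpace.Completion H), ((φ p.1 : UniformSpace.Completion H))⟫_ℂ‖ ≤
          ‖⟪(b i : UniformSpace.Completion H), ((φ p.1 : UniformSpace.Completion H))⟫_ℂ‖ ^ 2 +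
          ‖⟪(b i : UniformSpace.Completion H), ((φ p.2 : UniformSpace.Completion H))⟫_ℂ‖ ^ 2 := by
        nlinarith [sq_nonneg
          (‖⟪(b i : UniformSpace.Completion H), ((φ p.1 : UniformSpace.Completion H))⟫_ℂ‖ -
           ‖⟪(b i : UniformSpace.Completion H), ((φ p.2 : UniformSpace.Completion H))⟫_ℂ‖),
          norm_nonneg ⟪(b i : UniformSpace.Completion H),
            ((φ p.1 : UniformSpace.Completion H))⟫_ℂ,
          norm_nonneg ⟪(b i : UniformSpace.Completion H),
            ((φ p.2 : UniformSpace.Completion H))⟫_ℂ]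
      have h1 : ‖⟪φ p.1, φ p.2⟫_ℂ‖ *
            (‖⟪(b i : UniformSpace.Completion H), ((φ p.2 : UniformSpace.Completion H))⟫_ℂ‖ *
             ‖⟪(b i : UniformSpace.Completion H), ((φ p.1 : UniformSpace.Completion H))⟫_ℂ‖) ≤
          (C * C) *
          (‖⟪(b i : UniformSpace.Completion H), ((φ p.1 : UniformSpace.Completion H))⟫_ℂ‖ ^ 2 +
           ‖⟪(b i : UniformSpace.Completion H), ((φ p.2 : UniformSpace.Completion H))⟫_ℂ‖ ^ 2) :=
        mul_le_mul (hkb p.1 p.2) hab (by positivity) (by positivity)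
      nlinarith [mul_le_mul_of_nonneg_left h1
        (mul_nonneg (norm_nonneg (f p.1)) (norm_nonneg (f p.2)))]
    · filter_upwards with p
      exact (((b.orthonormal.inner_products_summable _).add
        (b.orthonormal.inner_products_summable _)).mul_left _)
    · have heq : (fun p : X × X => ∑' i : w, ((‖f p.1‖ * ‖f p.2‖ * (C * C)) *
          (‖⟪(b i : UniformSpace.Completion H), ((φ p.1 : UniformSpace.Completion H))⟫_ℂ‖ ^ 2 +
           ‖⟪(b i : UniformSpace.Completion H), ((φ p.2 : UniformSpace.Completion H))⟫_ℂ‖ ^ 2)))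
          = fun p : X × X =>
            (‖f p.1‖ * ‖f p.2‖ * (C * C)) * (‖φ p.1‖ ^ 2 + ‖φ p.2‖ ^ 2) := by
        funext p
        rw [tsum_mul_left, Summable.tsum_add (b.orthonormal.inner_products_summable _)
          (b.orthonormal.inner_products_summable _), parseval_sq b, parseval_sq b,
          UniformSpace.Completion.norm_coe, UniformSpace.Completion.norm_coe]
      rw [heq]
      refine ((hf.norm.mul_prod hf.norm).mul_const ((C * C) * (C ^ 2 + C ^ 2))).mono' ?_ ?_
      · exact ((hfae.norm.comp_fst.mul hfae.norm.comp_snd).mul_const _).mul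
          ((((hφ.comp measurable_fst).norm.pow_const 2).add
            ((hφ.comp measurable_snd).norm.pow_const 2)).aestronglyMeasurable)
      · filter_upwards with p
        rw [Real.norm_eq_abs, abs_of_nonneg (by positivity)]
        have hp1 : ‖φ p.1‖ ^ 2 ≤ C ^ 2 := by nlinarith [hC p.1, norm_nonneg (φ p.1)]
        have hp2 : ‖φ p.2‖ ^ 2 ≤ C ^ 2 := by nlinarith [hC p.2, norm_nonneg (φ p.2)]
        have hP : (0:ℝ) ≤ ‖f p.1‖ * ‖f p.2‖ * (C * C) := by positivity
        nlinarith [mul_le_mul_of_nonneg_left (add_le_add hp1 hp2) hP]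
    · filter_upwards with p
      have h1 := (b.hasSum_inner_mul_inner ((φ p.2 : UniformSpace.Completion H))
        ((φ p.1 : UniformSpace.Completion H))).mul_left
        ((starRingEnd ℂ) (f p.1) * f p.2 * ⟪φ p.1, φ p.2⟫_ℂ)
      convert h1 using 1
      case e'_3 => rfl
      have h2 : ⟪((φ p.2 : UniformSpace.Completion H)),
          ((φ p.1 : UniformSpace.Completion H))⟫_ℂ = (starRingEnd ℂ) ⟪φ p.1, φ p.2⟫_ℂ := by
        rw [hkcoe p.2 p.1, inner_conj_symm]
      rw [h2, normSq_complex]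
      ring
  -- integrability of the full integrand on the product space
  have hTint : Integrable (fun p : X × X =>
      (starRingEnd ℂ) (f p.1) * f p.2 * ((‖⟪φ p.1, φ p.2⟫_ℂ‖ : ℂ) ^ 2)) (μ.prod μ) := by
    refine ((hf.norm.mul_prod hf.norm).mul_const ((C * C) ^ 2)).mono' ?_ ?_
    · exact ((Complex.continuous_conj.comp_aestronglyMeasurable hfae).comp_fst.mul hfae.comp_snd).mul
        ((Complex.measurable_ofReal.comp hkm.norm).pow_const 2).aestronglyMeasurable
    · filter_upwards with p
      rw [norm_mul, norm_mul, RCLike.norm_conj]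
      have h2 : ‖((‖⟪φ p.1, φ p.2⟫_ℂ‖ : ℂ)) ^ 2‖ ≤ (C * C) ^ 2 := by
        rw [norm_pow, Complex.norm_real, Real.norm_eq_abs, abs_norm]
        exact pow_le_pow_left₀ (norm_nonneg _) (hkb p.1 p.2) 2
      have hP : (0:ℝ) ≤ ‖f p.1‖ * ‖f p.2‖ := mul_nonneg (norm_nonneg _) (norm_nonneg _)
      nlinarith [mul_le_mul_of_nonneg_left h2 hP]
  -- integrability of each summand on the product space
  have hFint : ∀ i : w, Integrable (fun p : X × X =>
      (starRingEnd ℂ) (f p.1 * ⟪((φ p.1 : UniformSpace.Completion H)),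
        (b i : UniformSpace.Completion H)⟫_ℂ) *
      (f p.2 * ⟪((φ p.2 : UniformSpace.Completion H)),
        (b i : UniformSpace.Completion H)⟫_ℂ) * ⟪φ p.1, φ p.2⟫_ℂ) (μ.prod μ) := by
    intro i
    refine (((hgint i).norm.mul_prod (hgint i).norm).mul_const (C * C)).mono' ?_ ?_
    · exact ((Complex.continuous_conj.comp_aestronglyMeasurable
        ((hgint i).1)).comp_fst.mul ((hgint i).1).comp_snd).mul hkm.aestronglyMeasurable
    · filter_upwards with p
      rw [norm_mul, norm_mul, RCLike.norm_conj]
      have hnn : (0:ℝ) ≤ ‖f p.1 * ⟪((φ p.1 : UniformSpace.Completion H)),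
          (b i : UniformSpace.Completion H)⟫_ℂ‖ *
          ‖f p.2 * ⟪((φ p.2 : UniformSpace.Completion H)),
          (b i : UniformSpace.Completion H)⟫_ℂ‖ :=
        mul_nonneg (norm_nonneg _) (norm_nonneg _)
      exact mul_le_mul_of_nonneg_left (hkb p.1 p.2) hnn
  -- each summand integral equals the iterated ISPD integral of k against g i
  have hFi : ∀ i : w,
      (∫ p : X × X, (starRingEnd ℂ) (f p.1) * f p.2 * ⟪φ p.1, φ p.2⟫_ℂ *
          (⟪((φ p.2 : UniformSpace.Completion H)), (b i : UniformSpace.Completion H)⟫_ℂ *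
           ⟪(b i : UniformSpace.Completion H), ((φ p.1 : UniformSpace.Completion H))⟫_ℂ)
          ∂(μ.prod μ))
      = ∫ x, ∫ y, (starRingEnd ℂ)
          (f x * ⟪((φ x : UniformSpace.Completion H)), (b i : UniformSpace.Completion H)⟫_ℂ) *
          (f y * ⟪((φ y : UniformSpace.Completion H)), (b i : UniformSpace.Completion H)⟫_ℂ) *
          ⟪φ x, φ y⟫_ℂ ∂μ ∂μ := by
    intro i
    have hfun : (fun p : X × X => (starRingEnd ℂ) (f p.1) * f p.2 * ⟪φ p.1, φ p.2⟫_ℂ *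
          (⟪((φ p.2 : UniformSpace.Completion H)), (b i : UniformSpace.Completion H)⟫_ℂ *
           ⟪(b i : UniformSpace.Completion H), ((φ p.1 : UniformSpace.Completion H))⟫_ℂ))
        = fun p : X × X => (starRingEnd ℂ)
          (f p.1 * ⟪((φ p.1 : UniformSpace.Completion H)),
            (b i : UniformSpace.Completion H)⟫_ℂ) *
          (f p.2 * ⟪((φ p.2 : UniformSpace.Completion H)),
            (b i : UniformSpace.Completion H)⟫_ℂ) * ⟪φ p.1, φ p.2⟫_ℂ := by
      funext p
      rw [map_mul, inner_conj_symm]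
      ring
    rw [hfun]
    exact MeasureTheory.integral_prod _ (hFint i)
  -- choose nonnegative values r i for each summand
  have hrch : ∀ i : w, ∃ r : ℝ, 0 ≤ r ∧
      (∫ x, ∫ y, (starRingEnd ℂ)
          (f x * ⟪((φ x : UniformSpace.Completion H)), (b i : UniformSpace.Completion H)⟫_ℂ) *
          (f y * ⟪((φ y : UniformSpace.Completion H)), (b i : UniformSpace.Completion H)⟫_ℂ) *
          ⟪φ x, φ y⟫_ℂ ∂μ ∂μ) = (r : ℂ) ∧
      ((¬ (fun x => f x * ⟪((φ x : UniformSpace.Completion H)),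
          (b i : UniformSpace.Completion H)⟫_ℂ) =ᵐ[μ] 0) → 0 < r) := by
    intro i
    by_cases hz : (fun x => f x * ⟪((φ x : UniformSpace.Completion H)),
        (b i : UniformSpace.Completion H)⟫_ℂ) =ᵐ[μ] 0
    · refine ⟨0, le_rfl, ?_, fun h' => absurd hz h'⟩
      have hae : ∀ᵐ x ∂μ, (∫ y, (starRingEnd ℂ)
          (f x * ⟪((φ x : UniformSpace.Completion H)), (b i : UniformSpace.Completion H)⟫_ℂ) *
          (f y * ⟪((φ y : UniformSpace.Completion H)), (b i : UniformSpace.Completion H)⟫_ℂ) *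
          ⟪φ x, φ y⟫_ℂ ∂μ) = 0 := by
        filter_upwards [hz] with x hx
        simp only [Pi.zero_apply] at hx
        simp [hx]
      rw [integral_congr_ae hae, integral_zero]
      simp
    · obtain ⟨r, hr0, hre⟩ := h μ hμ _ (hgint i) hz
      exact ⟨r, hr0.le, hre, fun _ => hr0⟩
  choose r hr0 hre hrpos using hrch
  -- not all coefficient densities vanish
  have hex : ∃ i : w, ¬ (fun x => f x * ⟪((φ x : UniformSpace.Completion H)),
      (b i : UniformSpace.Completion H)⟫_ℂ) =ᵐ[μ] 0 := by
    by_contra hall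
    push_neg at hall
    obtain ⟨r0, hr0pos, hint⟩ := h μ hμ f hf hf0
    have hint' : (∫ x, ∫ y, (starRingEnd ℂ) (f x) * f y * ⟪φ x, φ y⟫_ℂ ∂μ ∂μ) = (r0 : ℂ) := hint
    have haez : ∀ᵐ x ∂μ, ∀ i : w,
        f x * ⟪((φ x : UniformSpace.Completion H)), (b i : UniformSpace.Completion H)⟫_ℂ = 0 := by
      rw [MeasureTheory.ae_all_iff]
      intro i
      filter_upwards [hall i] with x hx
      simpa using hx
    have hzero : ∀ᵐ x ∂μ, (∫ y, (starRingEnd ℂ) (f x) * f y * ⟪φ x, φ y⟫_ℂ ∂μ) = 0 := by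
      filter_upwards [haez] with x hx
      by_cases hfx : f x = 0
      · simp [hfx]
      · have hinner : ∀ i : w,
            ⟪(b i : UniformSpace.Completion H), ((φ x : UniformSpace.Completion H))⟫_ℂ = 0 := by
          intro i
          have h2 : ⟪((φ x : UniformSpace.Completion H)),
              (b i : UniformSpace.Completion H)⟫_ℂ = 0 := by
            rcases mul_eq_zero.1 (hx i) with h' | h'
            · exact absurd h' hfx
            · exact h'
          rw [← inner_conj_symm, h2, map_zero]
        have hr00 : b.repr ((φ x : UniformSpace.Completion H)) = 0 := by
          ext i
          rw [b.repr_apply_apply]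
          simp [hinner i]
        have hΦ0 : ((φ x : UniformSpace.Completion H)) = 0 := by
          exact b.repr.map_eq_zero_iff.mp hr00
        have hky : ∀ y : X, ⟪φ x, φ y⟫_ℂ = 0 := by
          intro y
          rw [← hkcoe x y, hΦ0, inner_zero_left]
        simp [hky]
    rw [integral_congr_ae hzero, integral_zero] at hint'
    exact hr0pos.ne' (by exact_mod_cast hint'.symm)
  obtain ⟨i₀, hi₀⟩ := hex
  -- assemble
  have key2 : HasSum (fun i : w => ((r i : ℝ) : ℂ))
      (∫ p : X × X, (starRingEnd ℂ) (f p.1) * f p.2 * ((‖⟪φ p.1, φ p.2⟫_ℂ‖ : ℂ) ^ 2)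
        ∂(μ.prod μ)) := by
    have hfeq : (fun i : w => ∫ p : X × X,
        (starRingEnd ℂ) (f p.1) * f p.2 * ⟪φ p.1, φ p.2⟫_ℂ *
          (⟪((φ p.2 : UniformSpace.Completion H)), (b i : UniformSpace.Completion H)⟫_ℂ *
           ⟪(b i : UniformSpace.Completion H), ((φ p.1 : UniformSpace.Completion H))⟫_ℂ)
          ∂(μ.prod μ)) = fun i : w => ((r i : ℝ) : ℂ) :=
      funext fun i => (hFi i).trans (hre i)
    rw [← hfeq]
    exact key
  have hsum : Summable r := Complex.summable_ofReal.mp key2.summable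
  refine ⟨∑' i : w, r i, Summable.tsum_pos hsum hr0 i₀ (hrpos i₀ hi₀), ?_⟩
  have hTeq : (∫ p : X × X, (starRingEnd ℂ) (f p.1) * f p.2 *
      ((‖⟪φ p.1, φ p.2⟫_ℂ‖ : ℂ) ^ 2) ∂(μ.prod μ)) = ((∑' i : w, r i : ℝ) : ℂ) :=
    key2.unique (Complex.hasSum_ofReal.mpr hsum.hasSum)
  have hiter := MeasureTheory.integral_prod (fun p : X × X =>
    (starRingEnd ℂ) (f p.1) * f p.2 * ((‖⟪φ p.1, φ p.2⟫_ℂ‖ : ℂ) ^ 2)) hTint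
  exact hiter.symm.trans hTeq
end

section
/- Let T: P(X) → E be a continuous affine map from the space of Borel probability measures on a metrizable space X (with the topology of weak convergence) to a normed space E. Then the set {T(δ_x) : x ∈ X} is bounded in E. -/
open MeasureTheory Filter Topology

/-- If `T` is a continuous affine map from the space of Borel probability measures on a
metrizable space `X` (weak topology) into a normed space `E`, then the images of the
Dirac measures form a bounded subset of `E`. -/
theorem bounded_image_of_diracs
    {X : Type*} [TopologicalSpace X] [TopologicalSpace.MetrizableSpace X]
    [MeasurableSpace X] [OpensMeasurableSpace X]
    {E : Type*} [NormedAddCommGroup E] [NormedSpace ℝ E]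
    (T : ProbabilityMeasure X → E)
    (hT_cont : Continuous T)
    (hT_affine : ∀ (μ ν κ : ProbabilityMeasure X) (t : ℝ), 0 ≤ t → t ≤ 1 →
      (κ : Measure X) = ENNReal.ofReal t • (μ : Measure X)
          + ENNReal.ofReal (1 - t) • (ν : Measure X) →
      T κ = t • T μ + (1 - t) • T ν) :
    Bornology.IsBounded
      (Set.range fun x : X => T ⟨Measure.dirac x, inferInstance⟩) := by
  by_contra hb
  rw [isBounded_iff_forall_norm_le] at hb
  push_neg at hb
  have hx : ∀ n : ℕ, ∃ x : X, (n : ℝ) < ‖T ⟨Measure.dirac x, inferInstance⟩‖ := by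
    intro n
    obtain ⟨y, ⟨x, rfl⟩, hy⟩ := hb n
    exact ⟨x, hy⟩
  choose x hxn using hx
  set x₀ := x 0 with hx₀
  set D : X → ProbabilityMeasure X := fun a => ⟨Measure.dirac a, inferInstance⟩ with hD
  have ht0 : ∀ n : ℕ, (0:ℝ) ≤ 1 / (n:ℝ) := fun n => by positivity
  have ht1 : ∀ n : ℕ, 1 / (n:ℝ) ≤ 1 := by
    intro n
    rcases Nat.eq_zero_or_pos n with h | h
    · simp [h]
    · rw [div_le_one (by exact_mod_cast h)]; exact_mod_cast h
  have hprob : ∀ n : ℕ, IsProbabilityMeasure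
      (ENNReal.ofReal (1 / (n:ℝ)) • (Measure.dirac (x n)) +
        ENNReal.ofReal (1 - 1 / (n:ℝ)) • (Measure.dirac x₀)) := by
    intro n
    constructor
    have : ENNReal.ofReal (1 / (n:ℝ)) + ENNReal.ofReal (1 - 1 / (n:ℝ)) = 1 := by
      rw [← ENNReal.ofReal_add (ht0 n) (by linarith [ht1 n])]
      norm_num
    simp only [Measure.coe_add, Measure.coe_smul, Pi.add_apply, Pi.smul_apply,
      measure_univ, smul_eq_mul, mul_one]
    exact this
  set κ : ℕ → ProbabilityMeasure X := fun n =>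
    ⟨ENNReal.ofReal (1 / (n:ℝ)) • (Measure.dirac (x n)) +
      ENNReal.ofReal (1 - 1 / (n:ℝ)) • (Measure.dirac x₀), hprob n⟩ with hκ
  have haff : ∀ n : ℕ, T (κ n) = (1 / (n:ℝ)) • T (D (x n)) + (1 - 1 / (n:ℝ)) • T (D x₀) :=
    fun n => hT_affine (D (x n)) (D x₀) (κ n) (1 / (n:ℝ)) (ht0 n) (ht1 n) rfl
  have hconv : Tendsto κ atTop (𝓝 (D x₀)) := by
    rw [ProbabilityMeasure.tendsto_iff_forall_integral_tendsto]
    intro f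
    have hint : ∀ a : X, ∫ ω, f ω ∂(Measure.dirac a) = f a := fun a =>
      integral_dirac' _ _ f.continuous.stronglyMeasurable
    have hκint : ∀ n : ℕ, ∫ ω, f ω ∂((κ n : Measure X))
        = (1 / (n:ℝ)) * f (x n) + (1 - 1 / (n:ℝ)) * f x₀ := by
      intro n
      have h1 : Integrable (fun ω => f ω)
          (ENNReal.ofReal (1 / (n:ℝ)) • (Measure.dirac (x n))) :=
        (f.integrable _).smul_measure ENNReal.ofReal_ne_top
      have h2 : Integrable (fun ω => f ω)
          (ENNReal.ofReal (1 - 1 / (n:ℝ)) • (Measure.dirac x₀)) :=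
        (f.integrable _).smul_measure ENNReal.ofReal_ne_top
      show ∫ ω, f ω ∂(ENNReal.ofReal (1 / (n:ℝ)) • (Measure.dirac (x n)) +
        ENNReal.ofReal (1 - 1 / (n:ℝ)) • (Measure.dirac x₀)) = _
      rw [integral_add_measure h1 h2, integral_smul_measure, integral_smul_measure,
        hint, hint, ENNReal.toReal_ofReal (ht0 n), ENNReal.toReal_ofReal (by linarith [ht1 n])]
      simp [smul_eq_mul]
    have hDint : ∫ ω, f ω ∂((D x₀ : Measure X)) = f x₀ := hint x₀
    simp only [hκint, hDint]
    have hA : Tendsto (fun n : ℕ => (1 / (n:ℝ)) * f (x n)) atTop (𝓝 0) := by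
      apply squeeze_zero_norm (fun n => ?_)
        (a := fun n : ℕ => (1 / (n:ℝ)) * ‖f‖)
      · have := tendsto_one_div_atTop_nhds_zero_nat (𝕜 := ℝ)
        simpa using this.mul_const ‖f‖
      · rw [norm_mul, Real.norm_eq_abs (1 / (n:ℝ)), abs_of_nonneg (ht0 n)]
        exact mul_le_mul_of_nonneg_left (f.norm_coe_le_norm _) (ht0 n)
    have hB : Tendsto (fun n : ℕ => (1 - 1 / (n:ℝ)) * f x₀) atTop (𝓝 (f x₀)) := by
      have h1 : Tendsto (fun n : ℕ => 1 - 1 / (n:ℝ)) atTop (𝓝 1) := by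
        have := tendsto_one_div_atTop_nhds_zero_nat (𝕜 := ℝ)
        simpa using (tendsto_const_nhds (x := (1:ℝ))).sub this
      simpa using h1.mul_const (f x₀)
    simpa using hA.add hB
  have hTκ : Tendsto (fun n => T (κ n)) atTop (𝓝 (T (D x₀))) :=
    (hT_cont.tendsto _).comp hconv
  have hrem : Tendsto (fun n : ℕ => (1 - 1 / (n:ℝ)) • T (D x₀)) atTop (𝓝 (T (D x₀))) := by
    have h1 : Tendsto (fun n : ℕ => 1 - 1 / (n:ℝ)) atTop (𝓝 1) := by
      have := tendsto_one_div_atTop_nhds_zero_nat (𝕜 := ℝ)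
      simpa using (tendsto_const_nhds (x := (1:ℝ))).sub this
    simpa using h1.smul_const (T (D x₀))
  have hzero : Tendsto (fun n : ℕ => (1 / (n:ℝ)) • T (D (x n))) atTop (𝓝 0) := by
    have := hTκ.sub hrem
    simp only [haff, add_sub_cancel_right, sub_self] at this
    exact this
  have hev : ∀ᶠ n : ℕ in atTop, ‖(1 / (n:ℝ)) • T (D (x n))‖ < 1 := by
    have hn := hzero.norm
    rw [norm_zero] at hn
    exact hn.eventually_lt_const one_pos
  obtain ⟨n, hn1, hnlt⟩ := ((eventually_ge_atTop 1).and hev).exists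
  have hnpos : (0:ℝ) < n := by exact_mod_cast hn1
  have hkey : (1:ℝ) ≤ ‖(1 / (n:ℝ)) • T (D (x n))‖ := by
    rw [norm_smul, Real.norm_eq_abs, abs_of_pos (by positivity : (0:ℝ) < 1 / (n:ℝ))]
    have := mul_le_mul_of_nonneg_left (le_of_lt (hxn n)) (ht0 n)
    calc (1:ℝ) = (1 / (n:ℝ)) * n := by field_simp
    _ ≤ (1 / (n:ℝ)) * ‖T (D (x n))‖ := this
  linarith
end

section
/- Let φ: X → H be a continuous map into a Hilbert space with ‖φ(x)‖ = 1 for all x, and suppose the associated barycenter map is injective on probability measures (the kernel is characteristic). Then the barycenter map is injective on all finite complex Borel measures whose embedding is defined via the operator-valued map x ↦ |φ(x)⟩⟨φ(x)| into trace class; i.e., if two finite complex measures m₁, m₂ satisfy ∫|φ(x)⟩⟨φ(x)| dm₁ = ∫|φ(x)⟩⟨φ(x)| dm₂ (as Bochner integrals in trace class), then m₁ = m₂. -/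
set_option linter.unusedSectionVars false
set_option linter.unusedVariables false
set_option maxHeartbeats 1000000

open MeasureTheory
open scoped InnerProductSpace NNReal ENNReal

section Aux

variable {X : Type*} [TopologicalSpace X] [MeasurableSpace X] [OpensMeasurableSpace X]
variable {H : Type*} [NormedAddCommGroup H] [InnerProductSpace ℂ H]

lemma kappa_bound (φ : X → H) (hnorm : ∀ x, ‖φ x‖ = 1) (u w : H) (x : X) :
    ‖⟪u, φ x⟫_ℂ * ⟪φ x, w⟫_ℂ‖ ≤ ‖u‖ * ‖w‖ := by
  rw [norm_mul]
  have h1 : ‖⟪u, φ x⟫_ℂ‖ ≤ ‖u‖ := by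
    simpa [hnorm x] using norm_inner_le_norm (𝕜 := ℂ) u (φ x)
  have h2 : ‖⟪φ x, w⟫_ℂ‖ ≤ ‖w‖ := by
    simpa [hnorm x] using norm_inner_le_norm (𝕜 := ℂ) (φ x) w
  exact mul_le_mul h1 h2 (norm_nonneg _) (norm_nonneg _)

lemma kappa_cont {φ : X → H} (hφ : Continuous φ) (u w : H) :
    Continuous fun x => ⟪u, φ x⟫_ℂ * ⟪φ x, w⟫_ℂ :=
  (continuous_const.inner hφ).mul (hφ.inner continuous_const)

lemma kappa_integrable {φ : X → H}
    (hφ : Continuous φ) (hnorm : ∀ x, ‖φ x‖ = 1) (u w : H)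
    (μ : Measure X) [IsFiniteMeasure μ] :
    Integrable (fun x => ⟪u, φ x⟫_ℂ * ⟪φ x, w⟫_ℂ) μ :=
  Integrable.mono' (integrable_const (‖u‖ * ‖w‖))
    (kappa_cont hφ u w).aestronglyMeasurable
    (Filter.Eventually.of_forall (kappa_bound φ hnorm u w))

lemma hilbertBasis_countable [CompleteSpace H] [TopologicalSpace.SeparableSpace H]
    {ι : Type*} (b : HilbertBasis ι ℂ H) : Countable ι := by
  have hdist : ∀ i j : ι, i ≠ j → (1:ℝ) ≤ dist (b i) (b j) := by
    intro i j hij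
    have horth := b.orthonormal
    have h2 : ‖b i - b j‖ ^ 2 = 2 := by
      rw [@norm_sub_sq ℂ]
      simp [horth.1, horth.2 hij]
      norm_num
    have : (1:ℝ) ≤ ‖b i - b j‖ ^ 2 := by rw [h2]; norm_num
    rw [dist_eq_norm]
    nlinarith [norm_nonneg (b i - b j)]
  have hd : Pairwise (Function.onFun Disjoint fun i => Metric.ball (b i) (1/2)) := by
    intro i j hij
    apply Metric.ball_disjoint_ball
    have := hdist i j hij
    linarith
  exact hd.countable_of_isOpen_disjoint (fun i => Metric.isOpen_ball)
    (fun i => Metric.nonempty_ball.2 (by norm_num))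

lemma real_parts (r : ℝ) : ((r.toNNReal : ℝ)) - ((-r).toNNReal : ℝ) = r := by
  rcases le_total 0 r with h | h
  · rw [Real.coe_toNNReal r h, Real.toNNReal_of_nonpos (by linarith)]; simp
  · rw [Real.toNNReal_of_nonpos h, Real.coe_toNNReal (-r) (by linarith)]; simp [h]

noncomputable abbrev wd (μ : Measure X) (p : X → ℝ) : Measure X :=
  μ.withDensity fun x => (((p x).toNNReal : ℝ≥0) : ℝ≥0∞)

lemma integral_mul_kappa (μ : Measure X) [IsFiniteMeasure μ] (g : X → ℂ)
    (hgm : Measurable g) (hg : Integrable g μ) (κ : X → ℂ)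
    (hκm : AEStronglyMeasurable κ μ) (C : ℝ) (hκb : ∀ x, ‖κ x‖ ≤ C) :
    ∫ x, g x * κ x ∂μ =
      ((∫ x, κ x ∂(wd μ fun x => (g x).re) - ∫ x, κ x ∂(wd μ fun x => -(g x).re))
      + Complex.I * (∫ x, κ x ∂(wd μ fun x => (g x).im)
        - ∫ x, κ x ∂(wd μ fun x => -(g x).im))) := by
  show _ = ((∫ x, κ x ∂μ.withDensity (fun x => (((g x).re.toNNReal : ℝ≥0) : ℝ≥0∞))
       - ∫ x, κ x ∂μ.withDensity (fun x => ((((-(g x).re).toNNReal : ℝ≥0)) : ℝ≥0∞)))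
      + Complex.I * (∫ x, κ x ∂μ.withDensity (fun x => (((g x).im.toNNReal : ℝ≥0) : ℝ≥0∞))
       - ∫ x, κ x ∂μ.withDensity (fun x => (((-(g x).im).toNNReal : ℝ≥0) : ℝ≥0∞))))
  have hmre : Measurable fun x => (g x).re := Complex.measurable_re.comp hgm
  have hmim : Measurable fun x => (g x).im := Complex.measurable_im.comp hgm
  rw [integral_withDensity_eq_integral_smul hmre.real_toNNReal,
      integral_withDensity_eq_integral_smul (show Measurable fun x => -(g x).re from hmre.neg).real_toNNReal,
      integral_withDensity_eq_integral_smul hmim.real_toNNReal,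
      integral_withDensity_eq_integral_smul (show Measurable fun x => -(g x).im from hmim.neg).real_toNNReal]
  have hint : ∀ (p : X → ℝ) (hp : Measurable p) (hpb : ∀ x, |p x| ≤ ‖g x‖),
      Integrable (fun x => (p x).toNNReal • κ x) μ := by
    intro p hp hpb
    apply Integrable.mono' ((hg.norm.mul_const C))
      ((hp.real_toNNReal.coe_nnreal_real.aestronglyMeasurable).smul hκm)
    filter_upwards with x
    have : ((p x).toNNReal : ℝ) ≤ ‖g x‖ := by
      rw [Real.coe_toNNReal']
      rcases le_total (p x) 0 with h | h
      · simp [h]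
      · simpa [h, abs_of_nonneg h] using hpb x
    calc ‖(p x).toNNReal • κ x‖ = ((p x).toNNReal : ℝ) * ‖κ x‖ := by
          rw [NNReal.smul_def, norm_smul]; simp
      _ ≤ ‖g x‖ * C := by
          apply mul_le_mul this (hκb x) (norm_nonneg _) (norm_nonneg _)
  have i1 := hint _ hmre (fun x => Complex.abs_re_le_norm (g x))
  have i2 := hint (fun x => -(g x).re) hmre.neg (fun x => by simpa using Complex.abs_re_le_norm (g x))
  have i3 := hint _ hmim (fun x => Complex.abs_im_le_norm (g x))
  have i4 := hint (fun x => -(g x).im) hmim.neg (fun x => by simpa using Complex.abs_im_le_norm (g x))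
  have key : ∀ x, g x * κ x =
      ((g x).re.toNNReal • κ x - (-(g x).re).toNNReal • κ x)
      + Complex.I • ((g x).im.toNNReal • κ x - (-(g x).im).toNNReal • κ x) := by
    intro x
    have hre := real_parts (g x).re
    have him := real_parts (g x).im
    have hz : g x = (((g x).re.toNNReal : ℝ) - ((-(g x).re).toNNReal : ℝ) : ℝ)
        + ((((g x).im.toNNReal : ℝ) - ((-(g x).im).toNNReal : ℝ) : ℝ)) * Complex.I := by
      rw [hre, him]; exact (Complex.re_add_im (g x)).symm
    simp only [NNReal.smul_def, Complex.real_smul, smul_eq_mul]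
    push_cast at hz
    linear_combination κ x * hz
  rw [integral_congr_ae (Filter.Eventually.of_forall key)]
  have h12 : Integrable (fun x => (g x).re.toNNReal • κ x
      - (-(g x).re).toNNReal • κ x) μ := i1.sub i2
  have hI : Integrable (fun x => Complex.I • ((g x).im.toNNReal • κ x
      - (-(g x).im).toNNReal • κ x)) μ := (i3.sub i4).smul Complex.I
  rw [integral_add h12 hI, integral_sub i1 i2, integral_smul, integral_sub i3 i4, smul_eq_mul]

lemma finite_withDensity (μ : Measure X) [IsFiniteMeasure μ] (g : X → ℂ)
    (hg : Integrable g μ) (p : X → ℝ) (hpb : ∀ x, |p x| ≤ ‖g x‖) :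
    IsFiniteMeasure (wd μ p) := by
  apply isFiniteMeasure_withDensity
  have hb : ∀ x, (((p x).toNNReal : ℝ≥0) : ℝ≥0∞) ≤ (‖g x‖₊ : ℝ≥0∞) := by
    intro x
    rw [ENNReal.coe_le_coe]
    calc (p x).toNNReal ≤ (‖g x‖).toNNReal :=
        Real.toNNReal_le_toNNReal ((le_abs_self _).trans (hpb x))
      _ = ‖g x‖₊ := norm_toNNReal
  exact ((lintegral_mono hb).trans_lt hg.2).ne

lemma mass_repr [CompleteSpace H] {ι : Type*} [Countable ι] (b : HilbertBasis ι ℂ H)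
    {φ : X → H} (hφ : Continuous φ) (hnorm : ∀ x, ‖φ x‖ = 1)
    (ν : Measure X) [IsFiniteMeasure ν] :
    ν Set.univ = ∑' i, ENNReal.ofReal ((∫ x, ⟪b i, φ x⟫_ℂ * ⟪φ x, b i⟫_ℂ ∂ν).re) := by
  have hterm : ∀ (i : ι) (x : X), ⟪b i, φ x⟫_ℂ * ⟪φ x, b i⟫_ℂ
      = (Complex.normSq ⟪b i, φ x⟫_ℂ : ℂ) := by
    intro i x
    rw [← inner_conj_symm (φ x) (b i)]
    exact Complex.mul_conj _
  have hnn : ∀ (i : ι) (x : X), 0 ≤ (⟪b i, φ x⟫_ℂ * ⟪φ x, b i⟫_ℂ).re := by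
    intro i x; rw [hterm i x]; simpa using Complex.normSq_nonneg _
  have hsum : ∀ x : X, HasSum (fun i => (⟪b i, φ x⟫_ℂ * ⟪φ x, b i⟫_ℂ).re) 1 := by
    intro x
    have h0 := b.hasSum_inner_mul_inner (φ x) (φ x)
    have h1 : ⟪φ x, φ x⟫_ℂ = 1 := by
      rw [inner_self_eq_norm_sq_to_K, hnorm x]; norm_num
    rw [h1] at h0
    have h2 : HasSum (fun i => ⟪b i, φ x⟫_ℂ * ⟪φ x, b i⟫_ℂ) 1 := by
      convert h0 using 2 with i
      exacts [rfl, mul_comm _ _]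
    have := h2.mapL Complex.reCLM
    simpa using this
  calc ν Set.univ = ∫⁻ _, 1 ∂ν := lintegral_one.symm
    _ = ∫⁻ x, ∑' i, ENNReal.ofReal ((⟪b i, φ x⟫_ℂ * ⟪φ x, b i⟫_ℂ).re) ∂ν := by
        apply lintegral_congr
        intro x
        rw [← ENNReal.ofReal_tsum_of_nonneg (hnn · x) (hsum x).summable,
          (hsum x).tsum_eq, ENNReal.ofReal_one]
    _ = ∑' i, ∫⁻ x, ENNReal.ofReal ((⟪b i, φ x⟫_ℂ * ⟪φ x, b i⟫_ℂ).re) ∂ν := by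
        apply lintegral_tsum
        intro i
        exact (ENNReal.measurable_ofReal.comp
          (Complex.measurable_re.comp (kappa_cont hφ (b i) (b i)).measurable)).aemeasurable
    _ = ∑' i, ENNReal.ofReal ((∫ x, ⟪b i, φ x⟫_ℂ * ⟪φ x, b i⟫_ℂ ∂ν).re) := by
        congr 1; funext i
        rw [← ofReal_integral_eq_lintegral_ofReal
          ((kappa_integrable hφ hnorm (b i) (b i) ν).re.congr ?_)
          (Filter.Eventually.of_forall (hnn i))]
        · congr 1
          simpa using integral_re (kappa_integrable hφ hnorm (b i) (b i) ν)
        · filter_upwards with x; simp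

lemma setIntegral_repr (μ : Measure X) [IsFiniteMeasure μ] (g : X → ℂ)
    (hgm : Measurable g) (hg : Integrable g μ) {s : Set X} (hs : MeasurableSet s) :
    ∫ x in s, g x ∂μ =
      Complex.ofReal ((wd μ (fun x => (g x).re) s).toReal
        - (wd μ (fun x => -(g x).re) s).toReal)
      + Complex.ofReal ((wd μ (fun x => (g x).im) s).toReal
        - (wd μ (fun x => -(g x).im) s).toReal)
        * Complex.I := by
  have hre : Integrable (fun x => (g x).re) (μ.restrict s) := by
    simpa using (hg.integrableOn (s := s)).re
  have him : Integrable (fun x => (g x).im) (μ.restrict s) := by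
    simpa using (hg.integrableOn (s := s)).im
  have happ : ∀ (p : X → ℝ) (hp : Measurable p),
      ((μ.withDensity fun x => (((p x).toNNReal : ℝ≥0) : ℝ≥0∞)) s)
        = ∫⁻ x, ENNReal.ofReal (p x) ∂(μ.restrict s) := by
    intro p hp
    rw [withDensity_apply _ hs]
    rfl
  apply Complex.ext
  · simp only [Complex.add_re, Complex.ofReal_re, Complex.mul_re, Complex.ofReal_im,
      Complex.I_re, Complex.I_im]
    have h1 : (∫ x in s, g x ∂μ).re = ∫ x in s, (g x).re ∂μ := by
      simpa using (integral_re (hg.integrableOn (s := s))).symm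
    rw [h1]
    have := integral_eq_lintegral_pos_part_sub_lintegral_neg_part hre
    rw [this, happ (fun x => (g x).re) (Complex.measurable_re.comp hgm),
      happ (fun x => -(g x).re) (Complex.measurable_re.comp hgm).neg]
    ring
  · simp only [Complex.add_im, Complex.ofReal_re, Complex.mul_im, Complex.ofReal_im,
      Complex.I_re, Complex.I_im]
    have h1 : (∫ x in s, g x ∂μ).im = ∫ x in s, (g x).im ∂μ := by
      simpa using (integral_im (hg.integrableOn (s := s))).symm
    rw [h1]
    have := integral_eq_lintegral_pos_part_sub_lintegral_neg_part him
    rw [this, happ (fun x => (g x).im) (Complex.measurable_im.comp hgm),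
      happ (fun x => -(g x).im) (Complex.measurable_im.comp hgm).neg]
    ring

end Aux

section Main

variable {X : Type*} [TopologicalSpace X] [PolishSpace X] [MeasurableSpace X] [BorelSpace X]
variable {H : Type*} [NormedAddCommGroup H] [InnerProductSpace ℂ H] [CompleteSpace H]
  [TopologicalSpace.SeparableSpace H]

lemma measure_eq_of_kappa
    (φ : X → H) (hφ : Continuous φ) (hnorm : ∀ x, ‖φ x‖ = 1)
    (hchar : ∀ (P Q : Measure X), IsProbabilityMeasure P → IsProbabilityMeasure Q →
      (∀ u w : H, ∫ x, ⟪u, φ x⟫_ℂ * ⟪φ x, w⟫_ℂ ∂P = ∫ x, ⟪u, φ x⟫_ℂ * ⟪φ x, w⟫_ℂ ∂Q) →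
      P = Q)
    (σ τ : Measure X) [IsFiniteMeasure σ] [IsFiniteMeasure τ]
    (h : ∀ u w : H, ∫ x, ⟪u, φ x⟫_ℂ * ⟪φ x, w⟫_ℂ ∂σ = ∫ x, ⟪u, φ x⟫_ℂ * ⟪φ x, w⟫_ℂ ∂τ) :
    σ = τ := by
  obtain ⟨W, b, hb⟩ := exists_hilbertBasis ℂ H
  haveI : Countable W := hilbertBasis_countable b
  have hmass : σ Set.univ = τ Set.univ := by
    rw [mass_repr b hφ hnorm σ, mass_repr b hφ hnorm τ]
    congr 1; funext i; rw [h (b i) (b i)]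
  rcases eq_or_ne (σ Set.univ) 0 with h0 | h0
  · have hτ : τ Set.univ = 0 := by rw [← hmass]; exact h0
    rw [Measure.measure_univ_eq_zero.mp h0, Measure.measure_univ_eq_zero.mp hτ]
  · have hfin : σ Set.univ ≠ ⊤ := measure_ne_top σ _
    have hP : IsProbabilityMeasure ((σ Set.univ)⁻¹ • σ) := ⟨by
      rw [Measure.smul_apply, smul_eq_mul, ENNReal.inv_mul_cancel h0 hfin]⟩
    have hQ : IsProbabilityMeasure ((σ Set.univ)⁻¹ • τ) := ⟨by
      rw [Measure.smul_apply, smul_eq_mul, hmass, ← hmass, ENNReal.inv_mul_cancel h0 hfin]⟩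
    have hPQ := hchar _ _ hP hQ ?_
    · calc σ = (σ Set.univ) • ((σ Set.univ)⁻¹ • σ) := by
            rw [smul_smul, ENNReal.mul_inv_cancel h0 hfin, one_smul]
        _ = (σ Set.univ) • ((σ Set.univ)⁻¹ • τ) := by rw [hPQ]
        _ = τ := by rw [smul_smul, ENNReal.mul_inv_cancel h0 hfin, one_smul]
    · intro u v
      rw [integral_smul_measure, integral_smul_measure, h u v]

end Main

/-- If the barycenter embedding `m ↦ ∫ |φ(x)⟩⟨φ(x)| dm(x)` (expressed here through its
matrix elements `⟨u, T(m) w⟩ = ∫ ⟨u, φ x⟩⟨φ x, w⟩ dm`) is injective on probability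
measures (i.e. the kernel is characteristic), then it is injective on all finite complex
Borel measures, represented as densities `f` with respect to finite positive measures. -/
theorem barycenter_injective_complexMeasures
    {X : Type*} [TopologicalSpace X] [PolishSpace X]
    [MeasurableSpace X] [BorelSpace X]
    {H : Type*} [NormedAddCommGroup H] [InnerProductSpace ℂ H] [CompleteSpace H]
    [TopologicalSpace.SeparableSpace H]
    (φ : X → H) (hφ : Continuous φ) (hnorm : ∀ x, ‖φ x‖ = 1)
    (hchar : ∀ (P Q : Measure X), IsProbabilityMeasure P → IsProbabilityMeasure Q →
      (∀ u w : H, ∫ x, ⟪u, φ x⟫_ℂ * ⟪φ x, w⟫_ℂ ∂P = ∫ x, ⟪u, φ x⟫_ℂ * ⟪φ x, w⟫_ℂ ∂Q) →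
      P = Q)
    (μ₁ μ₂ : Measure X) [IsFiniteMeasure μ₁] [IsFiniteMeasure μ₂]
    (f₁ f₂ : X → ℂ) (hf₁ : Integrable f₁ μ₁) (hf₂ : Integrable f₂ μ₂)
    (heq : ∀ u w : H,
      ∫ x, f₁ x * (⟪u, φ x⟫_ℂ * ⟪φ x, w⟫_ℂ) ∂μ₁ =
      ∫ x, f₂ x * (⟪u, φ x⟫_ℂ * ⟪φ x, w⟫_ℂ) ∂μ₂) :
    ∀ s : Set X, MeasurableSet s → ∫ x in s, f₁ x ∂μ₁ = ∫ x in s, f₂ x ∂μ₂ := by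
  intro s hs
  obtain ⟨g₁, hg₁m, hg₁e⟩ : ∃ g, Measurable g ∧ f₁ =ᵐ[μ₁] g :=
    ⟨hf₁.1.aemeasurable.mk f₁, hf₁.1.aemeasurable.measurable_mk, hf₁.1.aemeasurable.ae_eq_mk⟩
  obtain ⟨g₂, hg₂m, hg₂e⟩ : ∃ g, Measurable g ∧ f₂ =ᵐ[μ₂] g :=
    ⟨hf₂.1.aemeasurable.mk f₂, hf₂.1.aemeasurable.measurable_mk, hf₂.1.aemeasurable.ae_eq_mk⟩
  have hgi₁ : Integrable g₁ μ₁ := hf₁.congr hg₁e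
  have hgi₂ : Integrable g₂ μ₂ := hf₂.congr hg₂e
  have heq' : ∀ u w : H, ∫ x, g₁ x * (⟪u, φ x⟫_ℂ * ⟪φ x, w⟫_ℂ) ∂μ₁
      = ∫ x, g₂ x * (⟪u, φ x⟫_ℂ * ⟪φ x, w⟫_ℂ) ∂μ₂ := by
    intro u w
    have e1 : ∫ x, f₁ x * (⟪u, φ x⟫_ℂ * ⟪φ x, w⟫_ℂ) ∂μ₁
        = ∫ x, g₁ x * (⟪u, φ x⟫_ℂ * ⟪φ x, w⟫_ℂ) ∂μ₁ :=
      integral_congr_ae (by filter_upwards [hg₁e] with x hx; rw [hx])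
    have e2 : ∫ x, f₂ x * (⟪u, φ x⟫_ℂ * ⟪φ x, w⟫_ℂ) ∂μ₂
        = ∫ x, g₂ x * (⟪u, φ x⟫_ℂ * ⟪φ x, w⟫_ℂ) ∂μ₂ :=
      integral_congr_ae (by filter_upwards [hg₂e] with x hx; rw [hx])
    rw [← e1, ← e2]; exact heq u w
  -- finiteness of the eight component measures
  have hbre₁ : ∀ x, |(g₁ x).re| ≤ ‖g₁ x‖ := fun x => Complex.abs_re_le_norm (g₁ x)
  have hbnre₁ : ∀ x, |(-(g₁ x).re)| ≤ ‖g₁ x‖ := fun x => by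
    simpa using Complex.abs_re_le_norm (g₁ x)
  have hbim₁ : ∀ x, |(g₁ x).im| ≤ ‖g₁ x‖ := fun x => Complex.abs_im_le_norm (g₁ x)
  have hbnim₁ : ∀ x, |(-(g₁ x).im)| ≤ ‖g₁ x‖ := fun x => by
    simpa using Complex.abs_im_le_norm (g₁ x)
  have hbre₂ : ∀ x, |(g₂ x).re| ≤ ‖g₂ x‖ := fun x => Complex.abs_re_le_norm (g₂ x)
  have hbnre₂ : ∀ x, |(-(g₂ x).re)| ≤ ‖g₂ x‖ := fun x => by
    simpa using Complex.abs_re_le_norm (g₂ x)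
  have hbim₂ : ∀ x, |(g₂ x).im| ≤ ‖g₂ x‖ := fun x => Complex.abs_im_le_norm (g₂ x)
  have hbnim₂ : ∀ x, |(-(g₂ x).im)| ≤ ‖g₂ x‖ := fun x => by
    simpa using Complex.abs_im_le_norm (g₂ x)
  haveI := finite_withDensity μ₁ g₁ hgi₁ _ hbre₁
  haveI := finite_withDensity μ₁ g₁ hgi₁ _ hbnre₁
  haveI := finite_withDensity μ₁ g₁ hgi₁ _ hbim₁
  haveI := finite_withDensity μ₁ g₁ hgi₁ _ hbnim₁
  haveI := finite_withDensity μ₂ g₂ hgi₂ _ hbre₂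
  haveI := finite_withDensity μ₂ g₂ hgi₂ _ hbnre₂
  haveI := finite_withDensity μ₂ g₂ hgi₂ _ hbim₂
  haveI := finite_withDensity μ₂ g₂ hgi₂ _ hbnim₂
  -- the combined identity
  have E : ∀ u w : H,
      (∫ x, ⟪u, φ x⟫_ℂ * ⟪φ x, w⟫_ℂ ∂((wd μ₁ fun x => (g₁ x).re) + (wd μ₂ fun x => -(g₂ x).re))
        - ∫ x, ⟪u, φ x⟫_ℂ * ⟪φ x, w⟫_ℂ ∂((wd μ₂ fun x => (g₂ x).re) + (wd μ₁ fun x => -(g₁ x).re)))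
      + Complex.I *
      (∫ x, ⟪u, φ x⟫_ℂ * ⟪φ x, w⟫_ℂ ∂((wd μ₁ fun x => (g₁ x).im) + (wd μ₂ fun x => -(g₂ x).im))
        - ∫ x, ⟪u, φ x⟫_ℂ * ⟪φ x, w⟫_ℂ ∂((wd μ₂ fun x => (g₂ x).im) + (wd μ₁ fun x => -(g₁ x).im)))
      = 0 := by
    intro u w
    have k1 := integral_mul_kappa μ₁ g₁ hg₁m hgi₁ _
      (kappa_cont hφ u w).aestronglyMeasurable (‖u‖ * ‖w‖) (kappa_bound φ hnorm u w)
    have k2 := integral_mul_kappa μ₂ g₂ hg₂m hgi₂ _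
      (kappa_cont hφ u w).aestronglyMeasurable (‖u‖ * ‖w‖) (kappa_bound φ hnorm u w)
    rw [integral_add_measure (kappa_integrable hφ hnorm u w _) (kappa_integrable hφ hnorm u w _),
      integral_add_measure (kappa_integrable hφ hnorm u w _) (kappa_integrable hφ hnorm u w _),
      integral_add_measure (kappa_integrable hφ hnorm u w _) (kappa_integrable hφ hnorm u w _),
      integral_add_measure (kappa_integrable hφ hnorm u w _) (kappa_integrable hφ hnorm u w _)]
    linear_combination heq' u w - k1 + k2
  have hconj : ∀ (ν : Measure X) (u w : H),
      (starRingEnd ℂ) (∫ x, ⟪w, φ x⟫_ℂ * ⟪φ x, u⟫_ℂ ∂ν) = ∫ x, ⟪u, φ x⟫_ℂ * ⟪φ x, w⟫_ℂ ∂ν := by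
    intro ν u w
    rw [← integral_conj]
    apply integral_congr_ae
    filter_upwards with x
    rw [map_mul, inner_conj_symm, inner_conj_symm]; ring
  have E' : ∀ u w : H,
      (∫ x, ⟪u, φ x⟫_ℂ * ⟪φ x, w⟫_ℂ ∂((wd μ₁ fun x => (g₁ x).re) + (wd μ₂ fun x => -(g₂ x).re))
        - ∫ x, ⟪u, φ x⟫_ℂ * ⟪φ x, w⟫_ℂ ∂((wd μ₂ fun x => (g₂ x).re) + (wd μ₁ fun x => -(g₁ x).re)))
      - Complex.I *
      (∫ x, ⟪u, φ x⟫_ℂ * ⟪φ x, w⟫_ℂ ∂((wd μ₁ fun x => (g₁ x).im) + (wd μ₂ fun x => -(g₂ x).im))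
        - ∫ x, ⟪u, φ x⟫_ℂ * ⟪φ x, w⟫_ℂ ∂((wd μ₂ fun x => (g₂ x).im) + (wd μ₁ fun x => -(g₁ x).im)))
      = 0 := by
    intro u w
    have h0 := congrArg (starRingEnd ℂ) (E w u)
    simp only [map_add, map_sub, map_mul, map_zero, Complex.conj_I] at h0
    rw [hconj, hconj, hconj, hconj] at h0
    linear_combination h0
  have hστ : (wd μ₁ fun x => (g₁ x).re) + (wd μ₂ fun x => -(g₂ x).re)
      = (wd μ₂ fun x => (g₂ x).re) + (wd μ₁ fun x => -(g₁ x).re) := by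
    apply measure_eq_of_kappa φ hφ hnorm hchar
    intro u w
    linear_combination (E u w + E' u w) / 2
  have hστ' : (wd μ₁ fun x => (g₁ x).im) + (wd μ₂ fun x => -(g₂ x).im)
      = (wd μ₂ fun x => (g₂ x).im) + (wd μ₁ fun x => -(g₁ x).im) := by
    apply measure_eq_of_kappa φ hφ hnorm hchar
    intro u w
    have h3 : (2 * Complex.I) *
        (∫ x, ⟪u, φ x⟫_ℂ * ⟪φ x, w⟫_ℂ ∂((wd μ₁ fun x => (g₁ x).im) + (wd μ₂ fun x => -(g₂ x).im))
        - ∫ x, ⟪u, φ x⟫_ℂ * ⟪φ x, w⟫_ℂ ∂((wd μ₂ fun x => (g₂ x).im) + (wd μ₁ fun x => -(g₁ x).im)))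
        = 0 := by linear_combination E u w - E' u w
    have h4 : (2 * Complex.I : ℂ) ≠ 0 := by
      simp [Complex.I_ne_zero]
    exact sub_eq_zero.mp ((mul_eq_zero.mp h3).resolve_left h4)
  -- evaluate at s
  have hre : (wd μ₁ fun x => (g₁ x).re) s + (wd μ₂ fun x => -(g₂ x).re) s
      = (wd μ₂ fun x => (g₂ x).re) s + (wd μ₁ fun x => -(g₁ x).re) s := by
    have := congrArg (fun m : Measure X => m s) hστ
    simpa [Measure.add_apply] using this
  have him : (wd μ₁ fun x => (g₁ x).im) s + (wd μ₂ fun x => -(g₂ x).im) s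
      = (wd μ₂ fun x => (g₂ x).im) s + (wd μ₁ fun x => -(g₁ x).im) s := by
    have := congrArg (fun m : Measure X => m s) hστ'
    simpa [Measure.add_apply] using this
  have hre' : ((wd μ₁ fun x => (g₁ x).re) s).toReal + ((wd μ₂ fun x => -(g₂ x).re) s).toReal
      = ((wd μ₂ fun x => (g₂ x).re) s).toReal + ((wd μ₁ fun x => -(g₁ x).re) s).toReal := by
    rw [← ENNReal.toReal_add (measure_ne_top _ _) (measure_ne_top _ _),
      ← ENNReal.toReal_add (measure_ne_top _ _) (measure_ne_top _ _), hre]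
  have him' : ((wd μ₁ fun x => (g₁ x).im) s).toReal + ((wd μ₂ fun x => -(g₂ x).im) s).toReal
      = ((wd μ₂ fun x => (g₂ x).im) s).toReal + ((wd μ₁ fun x => -(g₁ x).im) s).toReal := by
    rw [← ENNReal.toReal_add (measure_ne_top _ _) (measure_ne_top _ _),
      ← ENNReal.toReal_add (measure_ne_top _ _) (measure_ne_top _ _), him]
  have r1 : ∫ x in s, f₁ x ∂μ₁ = ∫ x in s, g₁ x ∂μ₁ :=
    integral_congr_ae (ae_restrict_of_ae hg₁e)
  have r2 : ∫ x in s, f₂ x ∂μ₂ = ∫ x in s, g₂ x ∂μ₂ :=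
    integral_congr_ae (ae_restrict_of_ae hg₂e)
  rw [r1, r2, setIntegral_repr μ₁ g₁ hg₁m hgi₁ hs, setIntegral_repr μ₂ g₂ hg₂m hgi₂ hs]
  rw [show ((wd μ₁ fun x => (g₁ x).re) s).toReal - ((wd μ₁ fun x => -(g₁ x).re) s).toReal
      = ((wd μ₂ fun x => (g₂ x).re) s).toReal - ((wd μ₂ fun x => -(g₂ x).re) s).toReal by linarith,
    show ((wd μ₁ fun x => (g₁ x).im) s).toReal - ((wd μ₁ fun x => -(g₁ x).im) s).toReal
      = ((wd μ₂ fun x => (g₂ x).im) s).toReal - ((wd μ₂ fun x => -(g₂ x).im) s).toReal by linarith]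
end
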